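/- Let B be a quasi-definite symmetric bilinear form on ℝ[t] satisfying B(hf,g) = B(f,hg) = (f,g)₀ where ( , )₀ is a quasi-definite bilinear form with monic orthogonal polynomials {P_n}, and h is monic of degree N. If {P_n^*} are the monic orthogonal polynomials for B, then for every n ≥ N there exist real numbers A_{n−1}^{[n]},…,A_{n−N}^{[n]} such that P_n^*(t) = P_n(t) + A_{n−1}^{[n]} P_{n−1}(t) + ⋯ + A_{n−N}^{[n]} P_{n−N}(t). -/

import Mathlib

open Polynomial

/-- Any polynomial of degree `< n` is a linear combination of the monic polynomials
`P 0, ..., P (n-1)` of degrees `0, ..., n-1`. -/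
lemma exists_expansion_aux (P : ℕ → Polynomial ℝ)
    (hPdeg : ∀ n, (P n).natDegree = n) (hPmonic : ∀ n, (P n).Monic) :
    ∀ n : ℕ, ∀ q : Polynomial ℝ, q.degree < (n : ℕ) →
      ∃ c : ℕ → ℝ, q = ∑ m ∈ Finset.range n, C (c m) * P m := by
  intro n
  induction n with
  | zero =>
    intro q hq
    refine ⟨0, ?_⟩
    simp only [Finset.range_zero, Finset.sum_empty]
    by_contra hq0
    exact absurd hq (not_lt.2 (by simpa using Polynomial.zero_le_degree_iff.2 hq0))
  | succ n ih =>
    intro q hq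
    by_cases hlt : q.degree < (n : ℕ)
    · obtain ⟨c, hc⟩ := ih q hlt
      refine ⟨Function.update c n 0, ?_⟩
      rw [Finset.sum_range_succ, Function.update_self]
      simp only [map_zero, zero_mul, add_zero]
      rw [hc]
      exact Finset.sum_congr rfl fun m hm => by
        rw [Function.update_of_ne (Finset.mem_range.1 hm).ne]
    · -- degree q = n
      have hq0 : q ≠ 0 := fun h0 =>
        hlt (by rw [h0, degree_zero]; exact_mod_cast WithBot.bot_lt_coe n)
      have hnd : q.natDegree = n := by
        have h1 : q.natDegree < n + 1 :=
          (Polynomial.natDegree_lt_iff_degree_lt hq0).2 (by exact_mod_cast hq)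
        have h2 : ¬ q.natDegree < n := fun hh =>
          hlt ((Polynomial.natDegree_lt_iff_degree_lt hq0).1 hh)
        omega
      have hdq : q.degree = (n : ℕ) := by
        rw [degree_eq_natDegree hq0, hnd]
      have hlc : q.leadingCoeff ≠ 0 := leadingCoeff_ne_zero.2 hq0
      set r := q - C q.leadingCoeff * P n with hr
      have hdegP : (P n).degree = (n : ℕ) := by
        rw [degree_eq_natDegree (hPmonic n).ne_zero, hPdeg n]
      have hdCP : (C q.leadingCoeff * P n).degree = (n : ℕ) := by
        rw [degree_C_mul hlc, hdegP]
      have hrd : r.degree < (n : ℕ) := by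
        have := Polynomial.degree_sub_lt (hdq.trans hdCP.symm) hq0 ?_
        · rwa [hdq] at this
        · rw [leadingCoeff_mul, leadingCoeff_C, (hPmonic n).leadingCoeff, mul_one]
      obtain ⟨c, hc⟩ := ih r hrd
      refine ⟨Function.update c n q.leadingCoeff, ?_⟩
      rw [Finset.sum_range_succ, Function.update_self]
      have hq' : q = r + C q.leadingCoeff * P n := by rw [hr]; ring
      conv_lhs => rw [hq', hc]
      congr 1
      exact Finset.sum_congr rfl fun m hm => by
        rw [Function.update_of_ne (Finset.mem_range.1 hm).ne]

theorem geronimus_connection_formula (N : ℕ) (hN : 1 ≤ N)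
    (h : Polynomial ℝ) (hmonic : h.Monic) (hdeg : h.natDegree = N)
    (B₀ B : Polynomial ℝ →ₗ[ℝ] Polynomial ℝ →ₗ[ℝ] ℝ)
    (hsym₀ : ∀ f g, B₀ f g = B₀ g f) (hsym : ∀ f g, B f g = B g f)
    (hrel : ∀ f g, B (h * f) g = B₀ f g) (hrel' : ∀ f g, B f (h * g) = B₀ f g)
    (P Pstar : ℕ → Polynomial ℝ)
    (hPmonic : ∀ n, (P n).Monic) (hPdeg : ∀ n, (P n).natDegree = n)
    (hPorth : ∀ n : ℕ, ∀ q : Polynomial ℝ, q.degree < n → B₀ (P n) q = 0)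
    (hPnd : ∀ n, B₀ (P n) (P n) ≠ 0)
    (hQmonic : ∀ n, (Pstar n).Monic) (hQdeg : ∀ n, (Pstar n).natDegree = n)
    (hQorth : ∀ n : ℕ, ∀ q : Polynomial ℝ, q.degree < n → B (Pstar n) q = 0)
    (hQnd : ∀ n, B (Pstar n) (Pstar n) ≠ 0) :
    ∀ n, N ≤ n → ∃ A : Fin N → ℝ,
      Pstar n = P n + ∑ k : Fin N, C (A k) * P (n - 1 - (k : ℕ)) := by
  intro n hn
  have hdegPk : ∀ m : ℕ, (P m).degree = (m : ℕ) := fun m => by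
    rw [degree_eq_natDegree (hPmonic m).ne_zero, hPdeg m]
  -- orthogonality of the P family
  have horthPP : ∀ m j : ℕ, m ≠ j → B₀ (P m) (P j) = 0 := by
    intro m j hmj
    rcases lt_or_gt_of_ne hmj with hlt | hgt
    · rw [hsym₀]
      exact hPorth j (P m) (by rw [hdegPk m]; exact_mod_cast hlt)
    · exact hPorth m (P j) (by rw [hdegPk j]; exact_mod_cast hgt)
  -- d := Pstar n - P n has degree < n
  set d := Pstar n - P n with hd
  have hdd : d.degree < (n : ℕ) := by
    rcases eq_or_ne d 0 with h0 | h0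
    · rw [h0, degree_zero]
      exact_mod_cast WithBot.bot_lt_coe n
    · have hdeq : (Pstar n).degree = (P n).degree := by
        rw [degree_eq_natDegree (hQmonic n).ne_zero, degree_eq_natDegree (hPmonic n).ne_zero,
          hQdeg, hPdeg]
      have := Polynomial.degree_sub_lt hdeq (hQmonic n).ne_zero
        (by rw [(hQmonic n).leadingCoeff, (hPmonic n).leadingCoeff])
      rwa [degree_eq_natDegree (hQmonic n).ne_zero, hQdeg] at this
  obtain ⟨c, hc⟩ := exists_expansion_aux P hPdeg hPmonic n d hdd
  -- coefficients with index < n - N vanish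
  have hzero : ∀ m, m < n - N → c m = 0 := by
    intro m hm
    have h1 : B₀ (P m) (Pstar n) = 0 := by
      rw [hsym₀, ← hrel' (Pstar n) (P m)]
      refine hQorth n (h * P m) ?_
      rw [degree_mul, degree_eq_natDegree hmonic.ne_zero, hdeg, hdegPk m]
      exact_mod_cast (by omega : N + m < n)
    have h2 : B₀ (P m) (P n) = 0 := horthPP m n (by omega)
    have hBd : B₀ (P m) d = 0 := by
      rw [hd, map_sub, h1, h2, sub_zero]
    have hBd' : B₀ (P m) d = c m * B₀ (P m) (P m) := by
      rw [hc, map_sum]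
      rw [Finset.sum_eq_single m]
      · rw [← Polynomial.smul_eq_C_mul, map_smul, smul_eq_mul]
      · intro j hj hjm
        rw [← Polynomial.smul_eq_C_mul, map_smul, horthPP m j (Ne.symm hjm), smul_zero]
      · intro hmem
        exact absurd (Finset.mem_range.2 (by omega)) hmem
    have := hBd'.symm.trans hBd
    exact (mul_eq_zero.1 this).resolve_right (hPnd m)
  -- define the coefficients A
  refine ⟨fun k => c (n - 1 - (k : ℕ)), ?_⟩
  have key : d = ∑ k : Fin N, C (c (n - 1 - (k : ℕ))) * P (n - 1 - (k : ℕ)) := by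
    rw [hc, Fin.sum_univ_eq_sum_range (fun k => C (c (n - 1 - k)) * P (n - 1 - k)) N]
    rw [Finset.range_eq_Ico,
      ← Finset.sum_Ico_consecutive _ (Nat.zero_le (n - N)) (by omega : n - N ≤ n)]
    have hfirst : ∑ m ∈ Finset.Ico 0 (n - N), C (c m) * P m = 0 := by
      refine Finset.sum_eq_zero fun m hm => ?_
      rw [hzero m (by simpa using (Finset.mem_Ico.1 hm).2)]
      simp
    rw [hfirst, zero_add]
    refine Finset.sum_nbij' (fun m => n - 1 - m) (fun k => n - 1 - k) ?_ ?_ ?_ ?_ ?_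
    · intro a ha
      simp only [Finset.mem_Ico, Finset.mem_range] at ha ⊢
      omega
    · intro a ha
      simp only [Finset.mem_Ico, Finset.mem_range] at ha ⊢
      omega
    · intro a ha
      simp only [Finset.mem_Ico, Finset.mem_range] at ha
      omega
    · intro a ha
      simp only [Finset.mem_Ico, Finset.mem_range] at ha
      omega
    · intro a ha
      simp only [Finset.mem_Ico, Finset.mem_range] at ha
      have hx : n - 1 - (n - 1 - a) = a := by omega
      rw [hx]
  rw [← key, hd]
  ring
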